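/- In the case k = 0, Q_T^θ(α, β) = ē_T + 4 c β² whenever α² ≤ β², and Q_T^θ(α, β) = ē_T + c (α² + β²)²/α² whenever α² > β² (in particular Q_T^θ no longer depends on θ and, up to the additive constant ē_T and the factor c, coincides with the Sadowsky density Q̄(α, β) = 4β² if α² ≤ β² and (α² + β²)²/α² if α² > β²); moreover (0, 0) is the unique global minimiser of Q_T^θ and Q_T^θ(0, 0) = ē_T. -/

import Mathlib

/-- Twist-case context: `c = c₁ + c₂`, `aθ = cos 2θ`, `bθ = sin 2θ`,
`f α β γ = c(α² + 2β² + γ²) + 2c|αγ − β²| + 2c₁ k aθ (α − γ) − 4c₁ k bθ β + 2c₁k² + ē_T`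
and `Q α β = ⨅ γ, f α β γ`. -/
theorem stmt6 (c₁ c₂ k θ eT : ℝ) (hc₁ : 0 < c₁) (hc₂ : 0 < c₂)
    (hθ : 0 ≤ θ ∧ θ < Real.pi) (heT : 0 ≤ eT)
    (c aθ bθ : ℝ) (hc : c = c₁ + c₂)
    (haθ : aθ = Real.cos (2 * θ)) (hbθ : bθ = Real.sin (2 * θ))
    (f : ℝ → ℝ → ℝ → ℝ)
    (hf : ∀ α β γ : ℝ, f α β γ =
      c * (α ^ 2 + 2 * β ^ 2 + γ ^ 2) + 2 * c * |α * γ - β ^ 2|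
        + 2 * c₁ * k * aθ * (α - γ) - 4 * c₁ * k * bθ * β + 2 * c₁ * k ^ 2 + eT)
    (Q : ℝ → ℝ → ℝ) (hQ : ∀ α β : ℝ, Q α β = ⨅ γ : ℝ, f α β γ)
    (hk : k = 0) :
    (∀ α β : ℝ, α ^ 2 ≤ β ^ 2 → Q α β = eT + 4 * c * β ^ 2) ∧
    (∀ α β : ℝ, β ^ 2 < α ^ 2 → Q α β = eT + c * (α ^ 2 + β ^ 2) ^ 2 / α ^ 2) ∧
    Q 0 0 = eT ∧
    (∀ α β : ℝ, eT ≤ Q α β ∧ (Q α β = eT → α = 0 ∧ β = 0)) := by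
  subst hk
  have hc0 : 0 < c := by rw [hc]; linarith
  have hf' : ∀ α β γ : ℝ, f α β γ =
      c * (α ^ 2 + 2 * β ^ 2 + γ ^ 2) + 2 * c * |α * γ - β ^ 2| + eT := by
    intro α β γ; rw [hf]; ring
  have hbdd : ∀ α β : ℝ, BddBelow (Set.range fun γ => f α β γ) := by
    intro α β
    refine ⟨eT, ?_⟩
    rintro x ⟨γ, rfl⟩
    simp only [hf']
    nlinarith [abs_nonneg (α * γ - β ^ 2), sq_nonneg α, sq_nonneg β, sq_nonneg γ]
  have key1 : ∀ α β : ℝ, α ^ 2 ≤ β ^ 2 → Q α β = eT + 4 * c * β ^ 2 := by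
    intro α β h
    rw [hQ]
    apply le_antisymm
    · have h1 : (⨅ γ : ℝ, f α β γ) ≤ f α β α := ciInf_le (hbdd α β) α
      have h2 : f α β α = eT + 4 * c * β ^ 2 := by
        rw [hf']
        have habs : |α * α - β ^ 2| = β ^ 2 - α ^ 2 := by
          rw [abs_of_nonpos (by nlinarith)]; ring
        rw [habs]; ring
      linarith
    · apply le_ciInf
      intro γ
      rw [hf']
      nlinarith [neg_abs_le (α * γ - β ^ 2), sq_nonneg (γ - α)]
  have key2 : ∀ α β : ℝ, β ^ 2 < α ^ 2 →
      Q α β = eT + c * (α ^ 2 + β ^ 2) ^ 2 / α ^ 2 := by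
    intro α β h
    have hα2 : 0 < α ^ 2 := lt_of_le_of_lt (sq_nonneg β) h
    have hα : α ≠ 0 := by
      intro h0; rw [h0] at hα2; simp at hα2
    rw [hQ]
    apply le_antisymm
    · have h1 : (⨅ γ : ℝ, f α β γ) ≤ f α β (β ^ 2 / α) := ciInf_le (hbdd α β) _
      have h2 : f α β (β ^ 2 / α) = eT + c * (α ^ 2 + β ^ 2) ^ 2 / α ^ 2 := by
        rw [hf']
        have : α * (β ^ 2 / α) - β ^ 2 = 0 := by field_simp; ring
        rw [this, abs_zero]
        field_simp
        ring
      linarith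
    · apply le_ciInf
      intro γ
      rw [hf']
      have hkey : c * (α ^ 2 + β ^ 2) ^ 2 / α ^ 2 ≤
          c * (α ^ 2 + 2 * β ^ 2 + γ ^ 2) + 2 * c * |α * γ - β ^ 2| := by
        rw [div_le_iff₀ hα2]
        rcases abs_cases (α * γ - β ^ 2) with ⟨he, hs⟩ | ⟨he, hs⟩ <;> rw [he]
        · nlinarith [mul_nonneg (mul_nonneg hc0.le hs) (by positivity : (0:ℝ) ≤ α ^ 2 + β ^ 2),
            mul_nonneg hc0.le (sq_nonneg (α * γ - β ^ 2))]
        · have ht : 0 ≤ β ^ 2 - α * γ := by linarith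
          nlinarith [mul_nonneg (mul_nonneg hc0.le ht) (by linarith : (0:ℝ) ≤ α ^ 2 - β ^ 2),
            mul_nonneg hc0.le (sq_nonneg (β ^ 2 - α * γ))]
      linarith
  refine ⟨key1, key2, ?_, ?_⟩
  · have := key1 0 0 (le_refl _)
    simpa using this
  · intro α β
    by_cases hcase : α ^ 2 ≤ β ^ 2
    · rw [key1 α β hcase]
      constructor
      · nlinarith [sq_nonneg β]
      · intro heq
        have hβ : β = 0 := by
          have : β ^ 2 = 0 := by nlinarith
          exact pow_eq_zero_iff (n := 2) (by norm_num) |>.mp this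
        have hα : α = 0 := by
          have : α ^ 2 = 0 := le_antisymm (by rw [hβ] at hcase; simpa using hcase) (sq_nonneg α)
          exact pow_eq_zero_iff (n := 2) (by norm_num) |>.mp this
        exact ⟨hα, hβ⟩
    · push_neg at hcase
      rw [key2 α β hcase]
      have hα2 : 0 < α ^ 2 := lt_of_le_of_lt (sq_nonneg β) hcase
      have hpos : 0 < c * (α ^ 2 + β ^ 2) ^ 2 / α ^ 2 := by
        apply div_pos _ hα2
        apply mul_pos hc0
        positivity
      constructor
      · linarith
      · intro heq; exfalso; linarith
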